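/- arXiv:1308.5439 — 3 statements merged into one kernel-verified Lean document; each statement's English description precedes it below -/
import Mathlib

section
/- In ℝ³, take the four pairs (ρⱼ, ρⱼ^⊥) given by ρⱼ = e₃ with ρ₁^⊥ = e₁, ρ₂^⊥ = e₂, ρ₃^⊥ = (e₁+e₂)/√2 for j = 1,2,3, and (ρ₄, ρ₄^⊥) = (e₁, (e₂+e₃)/√2). Define φⱼ(ξ) = |ξ·ρⱼ|² + |ξ·ρⱼ^⊥|². Then for any ξ ∈ ℝ³, if φⱼ(ξ) = φₗ(ξ) for all 1 ≤ j < l ≤ 4, then ξ = 0. -/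
/-- The explicit choice of four direction pairs in `ℝ³` verifies the ellipticity
condition: if `φⱼ(ξ) = |ξ·ρⱼ|² + |ξ·ρⱼ^⊥|²` agree for all pairs `j, l`, then `ξ = 0`.
Here `ρ₁ = ρ₂ = ρ₃ = e₃`, `ρ₁^⊥ = e₁`, `ρ₂^⊥ = e₂`, `ρ₃^⊥ = (e₁+e₂)/√2`,
`ρ₄ = e₁`, `ρ₄^⊥ = (e₂+e₃)/√2`. -/
theorem stmt3 (ξ : Fin 3 → ℝ) :
    ∀ φ : Fin 4 → ℝ,
      φ = ![ξ 2 ^ 2 + ξ 0 ^ 2,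
            ξ 2 ^ 2 + ξ 1 ^ 2,
            ξ 2 ^ 2 + ((ξ 0 + ξ 1) / Real.sqrt 2) ^ 2,
            ξ 0 ^ 2 + ((ξ 1 + ξ 2) / Real.sqrt 2) ^ 2] →
      (∀ j l : Fin 4, φ j = φ l) → ξ = 0 := by
  intro φ hφ h
  subst hφ
  have h12 := h 0 1
  have h13 := h 0 2
  have h14 := h 0 3
  simp [Matrix.cons_val_zero, Matrix.cons_val_one, Matrix.head_cons, div_pow] at h12 h13 h14
  -- derive coordinates zero
  have hab : ξ 0 * ξ 1 = 0 := by nlinarith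
  have h0 : ξ 0 = 0 := by
    have : ξ 0 ^ 2 = 0 := by nlinarith [sq_nonneg (ξ 0), sq_nonneg (ξ 1)]
    exact pow_eq_zero_iff (by norm_num) |>.mp this
  have h1 : ξ 1 = 0 := by
    have : ξ 1 ^ 2 = 0 := by nlinarith [sq_nonneg (ξ 0), sq_nonneg (ξ 1)]
    exact pow_eq_zero_iff (by norm_num) |>.mp this
  have h01 : ξ 0 = 0 ∧ ξ 1 = 0 := ⟨h0, h1⟩
  have h2 : ξ 2 = 0 := by nlinarith [h01.1, h01.2, sq_nonneg (ξ 2)]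
  funext i
  fin_cases i
  · exact h01.1
  · exact h01.2
  · exact h2
end

section
/- Let ζ = −isρ + √(s²+k²) ρ^⊥ with ρ⊥ρ^⊥ unit vectors in ℝ³, let a = conj(ζ̂_∞) where ζ̂_∞ = (−iρ+ρ^⊥)/√2, and let b ∈ ℂ³. Define η_ζ = (1/|ζ|)(−(ζ·a)ζ − k ζ×b + k² a). Then ζ·η_ζ = 0 (complex bilinear) and |η_ζ + ζ| = o(s) as s → ∞. -/
open Asymptotics

/-- Complex cross product on `ℂ³`. -/
noncomputable def ccross (u v : Fin 3 → ℂ) : Fin 3 → ℂ :=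
  ![u 1 * v 2 - u 2 * v 1, u 2 * v 0 - u 0 * v 2, u 0 * v 1 - u 1 * v 0]

set_option maxHeartbeats 2000000 in
/-- The CGO amplitude `η_ζ = (1/|ζ|)(−(ζ·a)ζ − k ζ×b + k² a)` with
`a = conj ζ̂_∞`, `ζ̂_∞ = (−iρ+ρ^⊥)/√2`, satisfies `ζ·η_ζ = 0` and
`|η_ζ + ζ| = o(s)` as `s → ∞`. -/
theorem stmt7 (k : ℝ) (hk : 0 < k) (ρ ρp : Fin 3 → ℝ)
    (hρ : ∑ i, ρ i ^ 2 = 1) (hρp : ∑ i, ρp i ^ 2 = 1)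
    (horth : ∑ i, ρ i * ρp i = 0) (b : Fin 3 → ℂ) :
    ∀ ζ : ℝ → Fin 3 → ℂ,
      ζ = (fun (s : ℝ) (i : Fin 3) => -Complex.I * (s : ℂ) * (ρ i : ℂ)
            + ((Real.sqrt (s ^ 2 + k ^ 2) : ℝ) : ℂ) * (ρp i : ℂ)) →
    ∀ a : Fin 3 → ℂ,
      a = (fun i => (starRingEnd ℂ)
            ((-Complex.I * (ρ i : ℂ) + (ρp i : ℂ)) / ((Real.sqrt 2 : ℝ) : ℂ))) →
    ∀ η : ℝ → Fin 3 → ℂ,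
      η = (fun (s : ℝ) (i : Fin 3) =>
            (1 / ((Real.sqrt (∑ j, ‖ζ s j‖ ^ 2) : ℝ) : ℂ)) *
              (-(∑ j, ζ s j * a j) * ζ s i - (k : ℂ) * ccross (ζ s) b i
                + (k : ℂ) ^ 2 * a i)) →
      ((∀ s : ℝ, 0 < s → ∑ i, ζ s i * η s i = 0) ∧
       (fun s : ℝ => Real.sqrt (∑ i, ‖η s i + ζ s i‖ ^ 2))
         =o[Filter.atTop] (fun s : ℝ => s)) := by
  intro ζ hζ a ha η hη
  -- basic real facts
  have h1 : ((ρ 0 : ℂ))^2 + (ρ 1 : ℂ)^2 + (ρ 2 : ℂ)^2 = 1 := by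
    have := hρ; rw [Fin.sum_univ_three] at this; exact_mod_cast this
  have h2 : ((ρp 0 : ℂ))^2 + (ρp 1 : ℂ)^2 + (ρp 2 : ℂ)^2 = 1 := by
    have := hρp; rw [Fin.sum_univ_three] at this; exact_mod_cast this
  have h3 : (ρ 0 : ℂ) * (ρp 0 : ℂ) + (ρ 1 : ℂ) * (ρp 1 : ℂ) + (ρ 2 : ℂ) * (ρp 2 : ℂ) = 0 := by
    have := horth; rw [Fin.sum_univ_three] at this; exact_mod_cast this
  have hr2 : ∀ s : ℝ, ((Real.sqrt (s ^ 2 + k ^ 2) : ℝ) : ℂ) ^ 2 = (s : ℂ)^2 + (k : ℂ)^2 := by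
    intro s
    have : Real.sqrt (s ^ 2 + k ^ 2) ^ 2 = s ^ 2 + k ^ 2 := Real.sq_sqrt (by positivity)
    exact_mod_cast this
  -- ζ·ζ = k²
  have hζζ : ∀ s : ℝ, ∑ j, ζ s j * ζ s j = (k : ℂ)^2 := by
    intro s
    rw [hζ, Fin.sum_univ_three]
    linear_combination (Complex.I^2 * (s:ℂ)^2) * h1 + ((Real.sqrt (s ^ 2 + k ^ 2) : ℝ) : ℂ)^2 * h2 +
      (-2 * Complex.I * (s:ℂ) * ((Real.sqrt (s ^ 2 + k ^ 2) : ℝ) : ℂ)) * h3 + hr2 s +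
      (s:ℂ)^2 * Complex.I_sq
  -- |ζ|² = 2s²+k²
  have hρ3 : ρ 0 ^ 2 + ρ 1 ^ 2 + ρ 2 ^ 2 = 1 := by rw [← Fin.sum_univ_three fun i => ρ i ^ 2]; exact hρ
  have hρp3 : ρp 0 ^ 2 + ρp 1 ^ 2 + ρp 2 ^ 2 = 1 := by rw [← Fin.sum_univ_three fun i => ρp i ^ 2]; exact hρp
  have habs : ∀ s : ℝ, (∑ j, ‖ζ s j‖ ^ 2) = 2 * s ^ 2 + k ^ 2 := by
    intro s
    have hrr : Real.sqrt (s ^ 2 + k ^ 2) ^ 2 = s ^ 2 + k ^ 2 := Real.sq_sqrt (by positivity)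
    rw [hζ, Fin.sum_univ_three]
    simp only [Complex.sq_norm, Complex.normSq_apply, Complex.add_re, Complex.add_im,
      Complex.mul_re, Complex.mul_im, Complex.ofReal_re, Complex.ofReal_im,
      Complex.I_re, Complex.I_im, Complex.neg_re, Complex.neg_im]
    ring_nf
    linear_combination s ^ 2 * hρ3 + Real.sqrt (s ^ 2 + k ^ 2) ^ 2 * hρp3 + hrr
  have hA : ∀ s : ℝ, (∑ j, ζ s j * a j)
      = ((s : ℂ) + ((Real.sqrt (s ^ 2 + k ^ 2) : ℝ) : ℂ)) / ((Real.sqrt 2 : ℝ) : ℂ) := by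
    intro s
    have h2ne : ((Real.sqrt 2 : ℝ) : ℂ) ≠ 0 := by
      exact_mod_cast Complex.ofReal_ne_zero.mpr (by positivity)
    rw [hζ, ha, Fin.sum_univ_three]
    simp only [map_div₀, map_add, map_mul, map_neg, Complex.conj_I, Complex.conj_ofReal]
    field_simp
    linear_combination (-Complex.I ^ 2 * (s:ℂ)) * h1 +
      ((Real.sqrt (s ^ 2 + k ^ 2) : ℝ) : ℂ) * h2 +
      (Complex.I * (((Real.sqrt (s ^ 2 + k ^ 2) : ℝ) : ℂ) - (s:ℂ))) * h3 +
      (-(s:ℂ)) * Complex.I_sq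
  constructor
  · intro s hs
    have hcc : ∑ j, ζ s j * ccross (ζ s) b j = 0 := by
      simp only [Fin.sum_univ_three, ccross]
      simp only [Matrix.cons_val_zero, Matrix.cons_val_one, Matrix.head_cons,
        Matrix.cons_val_two, Matrix.tail_cons]
      ring
    have expand : ∑ i, ζ s i * η s i
        = (1 / ((Real.sqrt (∑ j, ‖ζ s j‖ ^ 2) : ℝ) : ℂ)) *
          (-(∑ j, ζ s j * a j) * (∑ j, ζ s j * ζ s j)
            - (k : ℂ) * (∑ j, ζ s j * ccross (ζ s) b j)
            + (k : ℂ)^2 * (∑ j, ζ s j * a j)) := by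
      conv_lhs => rw [hη]
      simp only [Fin.sum_univ_three]
      ring
    rw [expand, hζζ, hcc]
    ring
  · -- Part 2
    have hkey : ∀ c : ℝ, 0 ≤ c →
        Filter.Tendsto (fun s : ℝ => Real.sqrt (c * s ^ 2 + k ^ 2) / s)
          Filter.atTop (nhds (Real.sqrt c)) := by
      intro c hc
      have h0 : Filter.Tendsto (fun s : ℝ => c + k ^ 2 / s ^ 2) Filter.atTop (nhds c) := by
        have hk2 : Filter.Tendsto (fun s : ℝ => k ^ 2 / s ^ 2) Filter.atTop (nhds 0) :=
          Filter.Tendsto.div_atTop tendsto_const_nhds (Filter.tendsto_pow_atTop two_ne_zero)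
        simpa using tendsto_const_nhds.add hk2
      have h1 : Filter.Tendsto (fun s : ℝ => Real.sqrt (c + k ^ 2 / s ^ 2))
          Filter.atTop (nhds (Real.sqrt c)) :=
        (Real.continuous_sqrt.tendsto c).comp h0
      apply h1.congr'
      filter_upwards [Filter.eventually_gt_atTop 0] with s hs
      have hss : (c + k ^ 2 / s ^ 2) * s ^ 2 = c * s ^ 2 + k ^ 2 := by field_simp
      rw [← hss, Real.sqrt_mul (by positivity), Real.sqrt_sq hs.le, mul_div_assoc,
        div_self hs.ne', mul_one]
    have hrs : Filter.Tendsto (fun s : ℝ => Real.sqrt (s ^ 2 + k ^ 2) / s)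
        Filter.atTop (nhds 1) := by
      have := hkey 1 zero_le_one
      simpa using this
    have hqs : Filter.Tendsto (fun s : ℝ => Real.sqrt (2 * s ^ 2 + k ^ 2) / s)
        Filter.atTop (nhds (Real.sqrt 2)) := hkey 2 (by norm_num)
    -- ζ/s componentwise
    have hζdiv : ∀ j : Fin 3, Filter.Tendsto (fun s : ℝ => ζ s j / (s : ℂ))
        Filter.atTop (nhds (-Complex.I * (ρ j : ℂ) + (ρp j : ℂ))) := by
      intro j
      have hcast : Filter.Tendsto (fun s : ℝ => ((Real.sqrt (s ^ 2 + k ^ 2) / s : ℝ) : ℂ))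
          Filter.atTop (nhds (1 : ℂ)) := by
        have := (Complex.continuous_ofReal.tendsto 1).comp hrs
        simpa [Function.comp_def] using this
      have hmain : Filter.Tendsto
          (fun s : ℝ => -Complex.I * (ρ j : ℂ) + ((Real.sqrt (s ^ 2 + k ^ 2) / s : ℝ) : ℂ) * (ρp j : ℂ))
          Filter.atTop (nhds (-Complex.I * (ρ j : ℂ) + (ρp j : ℂ))) := by
        have := (tendsto_const_nhds (x := -Complex.I * (ρ j : ℂ)) (f := Filter.atTop)).add
          (hcast.mul (tendsto_const_nhds (x := ((ρp j : ℂ)))))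
        simpa using this
      apply hmain.congr'
      filter_upwards [Filter.eventually_gt_atTop 0] with s hs
      have hsne : (s : ℂ) ≠ 0 := by exact_mod_cast Complex.ofReal_ne_zero.mpr hs.ne'
      rw [hζ]
      push_cast
      field_simp
    -- 1/q → 0
    have hqtop : Filter.Tendsto (fun s : ℝ => Real.sqrt (2 * s ^ 2 + k ^ 2))
        Filter.atTop Filter.atTop := by
      apply Filter.tendsto_atTop_mono' _ _ Filter.tendsto_id
      filter_upwards [Filter.eventually_ge_atTop 0] with s hs
      calc (id s : ℝ) = Real.sqrt (s ^ 2) := (Real.sqrt_sq hs).symm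
        _ ≤ Real.sqrt (2 * s ^ 2 + k ^ 2) := Real.sqrt_le_sqrt (by nlinarith)
    have hqinv : Filter.Tendsto (fun s : ℝ => (1 : ℂ) / ((Real.sqrt (2 * s ^ 2 + k ^ 2) : ℝ) : ℂ))
        Filter.atTop (nhds 0) := by
      have hr : Filter.Tendsto (fun s : ℝ => 1 / Real.sqrt (2 * s ^ 2 + k ^ 2))
          Filter.atTop (nhds 0) := by
        simpa [one_div, Pi.inv_def] using hqtop.inv_tendsto_atTop
      have := (Complex.continuous_ofReal.tendsto 0).comp hr
      simpa [Function.comp_def, Complex.ofReal_div] using this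
    have hsinv : Filter.Tendsto (fun s : ℝ => (1 : ℂ) / (s : ℂ)) Filter.atTop (nhds 0) := by
      have hr : Filter.Tendsto (fun s : ℝ => 1 / s) Filter.atTop (nhds 0) := by
        simpa [one_div] using tendsto_inv_atTop_zero
      have := (Complex.continuous_ofReal.tendsto 0).comp hr
      simpa [Function.comp_def, Complex.ofReal_div] using this
    -- 1 - (s+r)/√2/q → 0
    have hfrac : Filter.Tendsto (fun s : ℝ =>
        (1 : ℂ) - ((s : ℂ) + ((Real.sqrt (s ^ 2 + k ^ 2) : ℝ) : ℂ)) / ((Real.sqrt 2 : ℝ) : ℂ)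
          / ((Real.sqrt (2 * s ^ 2 + k ^ 2) : ℝ) : ℂ)) Filter.atTop (nhds 0) := by
      have hreal : Filter.Tendsto (fun s : ℝ =>
          (s + Real.sqrt (s ^ 2 + k ^ 2)) / Real.sqrt 2 / Real.sqrt (2 * s ^ 2 + k ^ 2))
          Filter.atTop (nhds 1) := by
        have hnum : Filter.Tendsto (fun s : ℝ => 1 + Real.sqrt (s ^ 2 + k ^ 2) / s)
            Filter.atTop (nhds 2) := by
          have h := (tendsto_const_nhds (x := (1:ℝ)) (f := Filter.atTop)).add hrs
          norm_num at h
          exact h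
        have hden : Filter.Tendsto (fun s : ℝ => Real.sqrt 2 * (Real.sqrt (2 * s ^ 2 + k ^ 2) / s))
            Filter.atTop (nhds 2) := by
          have := (tendsto_const_nhds (x := Real.sqrt 2) (f := Filter.atTop)).mul hqs
          rwa [Real.mul_self_sqrt (by norm_num)] at this
        have hdiv := hnum.div hden two_ne_zero
        norm_num at hdiv
        apply hdiv.congr'
        filter_upwards [Filter.eventually_gt_atTop 0] with s hs
        have h2pos : (0:ℝ) < Real.sqrt 2 := by positivity
        have hqpos : (0:ℝ) < Real.sqrt (2 * s ^ 2 + k ^ 2) := by positivity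
        simp only [Pi.div_apply]
        field_simp
      have := (Complex.continuous_ofReal.tendsto 1).comp hreal
      have h2 : Filter.Tendsto (fun s : ℝ =>
          ((s : ℂ) + ((Real.sqrt (s ^ 2 + k ^ 2) : ℝ) : ℂ)) / ((Real.sqrt 2 : ℝ) : ℂ)
            / ((Real.sqrt (2 * s ^ 2 + k ^ 2) : ℝ) : ℂ)) Filter.atTop (nhds 1) := by
        have heq : ∀ s : ℝ, (((s + Real.sqrt (s ^ 2 + k ^ 2)) / Real.sqrt 2 /
            Real.sqrt (2 * s ^ 2 + k ^ 2) : ℝ) : ℂ)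
            = ((s : ℂ) + ((Real.sqrt (s ^ 2 + k ^ 2) : ℝ) : ℂ)) / ((Real.sqrt 2 : ℝ) : ℂ)
              / ((Real.sqrt (2 * s ^ 2 + k ^ 2) : ℝ) : ℂ) := by
          intro s; push_cast; ring
        simpa [Function.comp_def, heq] using this
      have h3 := (tendsto_const_nhds (x := (1:ℂ)) (f := Filter.atTop)).sub h2
      simpa using h3
    -- cross product / s
    have hcdiv : ∀ i : Fin 3, Filter.Tendsto (fun s : ℝ => ccross (ζ s) b i / (s : ℂ))
        Filter.atTop (nhds (ccross (fun j => -Complex.I * (ρ j : ℂ) + (ρp j : ℂ)) b i)) := by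
      intro i
      fin_cases i
      · have := ((hζdiv 1).mul (tendsto_const_nhds (x := b 2))).sub
          ((hζdiv 2).mul (tendsto_const_nhds (x := b 1)))
        apply this.congr
        intro s; simp [ccross]; ring
      · have := ((hζdiv 2).mul (tendsto_const_nhds (x := b 0))).sub
          ((hζdiv 0).mul (tendsto_const_nhds (x := b 2)))
        apply this.congr
        intro s; simp [ccross]; ring
      · have := ((hζdiv 0).mul (tendsto_const_nhds (x := b 1))).sub
          ((hζdiv 1).mul (tendsto_const_nhds (x := b 0)))
        apply this.congr
        intro s; simp [ccross]; ring
    -- componentwise limit of (η+ζ)/s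
    have hG : ∀ i : Fin 3, Filter.Tendsto (fun s : ℝ => (η s i + ζ s i) / (s : ℂ))
        Filter.atTop (nhds 0) := by
      intro i
      have hmain : Filter.Tendsto (fun s : ℝ =>
          (ζ s i / (s : ℂ)) *
            ((1 : ℂ) - ((s : ℂ) + ((Real.sqrt (s ^ 2 + k ^ 2) : ℝ) : ℂ)) / ((Real.sqrt 2 : ℝ) : ℂ)
              / ((Real.sqrt (2 * s ^ 2 + k ^ 2) : ℝ) : ℂ))
          + (-(k : ℂ) * (ccross (ζ s) b i / (s : ℂ))) *
              ((1 : ℂ) / ((Real.sqrt (2 * s ^ 2 + k ^ 2) : ℝ) : ℂ))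
          + (k : ℂ) ^ 2 * a i * ((1 : ℂ) / ((Real.sqrt (2 * s ^ 2 + k ^ 2) : ℝ) : ℂ))
              * ((1 : ℂ) / (s : ℂ))) Filter.atTop (nhds 0) := by
        have t1 := (hζdiv i).mul hfrac
        have t2 := ((tendsto_const_nhds (x := -(k:ℂ)) (f := Filter.atTop)).mul (hcdiv i)).mul hqinv
        have t3 := (((tendsto_const_nhds (x := (k:ℂ)^2 * a i) (f := Filter.atTop)).mul hqinv).mul hsinv)
        have t := (t1.add t2).add t3
        simpa only [mul_zero, zero_mul, add_zero, zero_add] using t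
      apply hmain.congr'
      filter_upwards [Filter.eventually_gt_atTop 0] with s hs
      have hsne : (s : ℂ) ≠ 0 := by exact_mod_cast Complex.ofReal_ne_zero.mpr hs.ne'
      have hqne : ((Real.sqrt (2 * s ^ 2 + k ^ 2) : ℝ) : ℂ) ≠ 0 := by
        exact_mod_cast Complex.ofReal_ne_zero.mpr (by positivity)
      have h2ne : ((Real.sqrt 2 : ℝ) : ℂ) ≠ 0 := by
        exact_mod_cast Complex.ofReal_ne_zero.mpr (by positivity)
      have hηs : η s i = (1 / ((Real.sqrt (2 * s ^ 2 + k ^ 2) : ℝ) : ℂ)) *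
          (-(((s : ℂ) + ((Real.sqrt (s ^ 2 + k ^ 2) : ℝ) : ℂ)) / ((Real.sqrt 2 : ℝ) : ℂ)) * ζ s i
            - (k : ℂ) * ccross (ζ s) b i + (k : ℂ) ^ 2 * a i) := by
        rw [hη]
        simp only
        rw [habs s, hA s]
      rw [hηs]
      set Z := ζ s i with hZ
      set C := ccross (ζ s) b i with hC
      set A := a i with hA'
      ring
    -- assemble
    rw [Asymptotics.isLittleO_iff_tendsto']
    · have hsum : Filter.Tendsto
          (fun s : ℝ => ∑ i, ‖(η s i + ζ s i) / (s : ℂ)‖ ^ 2)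
          Filter.atTop (nhds 0) := by
        have : ∀ i : Fin 3, Filter.Tendsto
            (fun s : ℝ => ‖(η s i + ζ s i) / (s : ℂ)‖ ^ 2)
            Filter.atTop (nhds 0) := by
          intro i
          have h1 := (continuous_norm.tendsto 0).comp (hG i)
          have h2 := h1.pow 2
          simpa using h2
        have := tendsto_finset_sum (Finset.univ : Finset (Fin 3)) (fun i _ => this i)
        simpa using this
      have hsqrt := (Real.continuous_sqrt.tendsto 0).comp hsum
      rw [Real.sqrt_zero] at hsqrt
      apply hsqrt.congr'
      filter_upwards [Filter.eventually_gt_atTop 0] with s hs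
      have habs2 : ∀ i : Fin 3, ‖(η s i + ζ s i) / (s : ℂ)‖ ^ 2
          = ‖η s i + ζ s i‖ ^ 2 / s ^ 2 := by
        intro i
        rw [norm_div, div_pow, Complex.norm_real, Real.norm_eq_abs, abs_of_pos hs]
      simp only [Function.comp, habs2, ← Finset.sum_div]
      rw [Real.sqrt_div (by positivity), Real.sqrt_sq hs.le]
    · filter_upwards [Filter.eventually_gt_atTop 0] with s hs h
      exact absurd h hs.ne'
end

section
/- Let γ ∈ C²(ℝⁿ;ℂ) be nowhere zero with a chosen branch of square root γ^{1/2}, and set α = dγ/γ and 𝔮 = ¼⟨α,α⟩ − ½δα. Then for any constant ζ ∈ ℂⁿ and any C² 1-form R: γ^{1/2} ∘ (−(Δ_H + 2(iζ∨d) + (α∨d̃))) ∘ γ^{−1/2} applied to R equals (−Δ_H − 2(iζ∨d) + 𝔮)R, i.e. conjugation by γ^{1/2} removes the first-order term α∨d̃ at the price of the zeroth-order potential 𝔮. -/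
/-- Partial derivative in the `i`-th coordinate direction. -/
noncomputable def pd (n : ℕ) (i : Fin n) (f : (Fin n → ℝ) → ℂ) (x : Fin n → ℝ) : ℂ :=
  fderiv ℝ f x (Pi.single i 1)


lemma pd_add {n : ℕ} {f g : (Fin n → ℝ) → ℂ} {x : Fin n → ℝ} (j : Fin n)
    (hf : DifferentiableAt ℝ f x) (hg : DifferentiableAt ℝ g x) :
    pd n j (fun y => f y + g y) x = pd n j f x + pd n j g x := by
  simp [pd, fderiv_fun_add hf hg]

lemma pd_mul {n : ℕ} {f g : (Fin n → ℝ) → ℂ} {x : Fin n → ℝ} (j : Fin n)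
    (hf : DifferentiableAt ℝ f x) (hg : DifferentiableAt ℝ g x) :
    pd n j (fun y => f y * g y) x = pd n j f x * g x + f x * pd n j g x := by
  simp [pd, fderiv_fun_mul hf hg]; ring

lemma pd_contDiff {n : ℕ} {f : (Fin n → ℝ) → ℂ} (hf : ContDiff ℝ 2 f) (j : Fin n) :
    ContDiff ℝ 1 (fun y => pd n j f y) := by
  have h1 : ContDiff ℝ 1 (fderiv ℝ f) := hf.fderiv_right (by norm_num)
  exact h1.clm_apply contDiff_const

lemma mergeL {n : ℕ} (c : ℂ) (f1 f2 f3 : Fin n → ℂ) :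
    -(∑ j, f1 j) - c * (∑ j, f2 j) - (∑ j, f3 j)
      = ∑ j, (-(f1 j) - c * f2 j - f3 j) := by
  simp [Finset.sum_sub_distrib, Finset.mul_sum, Finset.sum_neg_distrib]

lemma mergeR {n : ℕ} (c : ℂ) (f1 f2 f3 : Fin n → ℂ) :
    -(∑ j, f1 j) - c * (∑ j, f2 j) + (∑ j, f3 j)
      = ∑ j, (-(f1 j) - c * f2 j + f3 j) := by
  simp [Finset.sum_sub_distrib, Finset.sum_add_distrib, Finset.mul_sum,
    Finset.sum_neg_distrib, sub_add_eq_add_sub]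

/-- Liouville-type transformation: with `γ` nowhere zero, a `C²` branch `g = γ^{1/2}`
(`g² = γ`), `α = dγ/γ` and `𝔮 = ¼⟨α,α⟩ − ½δα = ¼Σαⱼ² + ½Σ∂ⱼαⱼ`, conjugation of
`−(Δ_H + 2(iζ∨d) + (α∨d̃))` by `γ^{1/2}` equals `−Δ_H − 2(iζ∨d) + 𝔮`, componentwise
on `C²` 1-forms `R`. -/
theorem stmt17 (n : ℕ) (ζ : Fin n → ℂ) (γ g : (Fin n → ℝ) → ℂ)
    (hγ : ContDiff ℝ 2 γ) (hg : ContDiff ℝ 2 g) (hγ0 : ∀ x, γ x ≠ 0)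
    (hbranch : ∀ x, g x ^ 2 = γ x)
    (R : (Fin n → ℝ) → Fin n → ℂ) (hR : ∀ k, ContDiff ℝ 2 (fun x => R x k)) :
    ∀ α : (Fin n → ℝ) → Fin n → ℂ, α = (fun x j => pd n j γ x / γ x) →
    ∀ qf : (Fin n → ℝ) → ℂ,
      qf = (fun x => (1 / 4) * (∑ j, α x j ^ 2)
            + (1 / 2) * ∑ j, pd n j (fun y => α y j) x) →
    ∀ x, ∀ k : Fin n,
      g x * ( -(∑ j, pd n j (fun y => pd n j (fun z => R z k / g z) y) x)
        - 2 * Complex.I * (∑ j, ζ j * pd n j (fun z => R z k / g z) x)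
        - (∑ j, α x j * (pd n j (fun z => R z k / g z) x
            + Complex.I * ζ j * (R x k / g x))) )
      = -(∑ j, pd n j (fun y => pd n j (fun z => R z k) y) x)
        - 2 * Complex.I * (∑ j, ζ j * pd n j (fun z => R z k) x)
        + qf x * R x k := by
  intro α hα qf hqf x k
  have hg0 : ∀ y, g y ≠ 0 := by
    intro y hy
    exact hγ0 y (by rw [← hbranch y, hy]; ring)
  obtain ⟨v, hvdef⟩ : ∃ v : (Fin n → ℝ) → ℂ, v = fun z => R z k / g z := ⟨_, rfl⟩
  rw [show (fun z => R z k / g z) = v from hvdef.symm]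
  have hvC : ContDiff ℝ 2 v := by
    have hve : v = fun z => R z k * (g z)⁻¹ :=
      hvdef.trans (funext fun z => div_eq_mul_inv _ _)
    rw [hve]; exact (hR k).mul (hg.inv hg0)
  have Dg : Differentiable ℝ g := hg.differentiable two_ne_zero
  have Dv : Differentiable ℝ v := hvC.differentiable two_ne_zero
  have Dpg : ∀ j, Differentiable ℝ (fun y => pd n j g y) :=
    fun j => (pd_contDiff hg j).differentiable one_ne_zero
  have Dpv : ∀ j, Differentiable ℝ (fun y => pd n j v y) :=
    fun j => (pd_contDiff hvC j).differentiable one_ne_zero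
  have hRk : (fun z => R z k) = fun z => v z * g z := by
    rw [hvdef]; exact funext fun z => (div_mul_cancel₀ _ (hg0 z)).symm
  have hr : R x k = v x * g x := congrFun hRk x
  -- first derivative of R·k
  have F1 : ∀ (j : Fin n) (y : Fin n → ℝ),
      pd n j (fun z => R z k) y = pd n j v y * g y + v y * pd n j g y := by
    intro j y; rw [hRk]; exact pd_mul j (Dv y) (Dg y)
  -- second derivative of R·k
  have F2 : ∀ j : Fin n,
      pd n j (fun y => pd n j (fun z => R z k) y) x
        = (pd n j (fun y => pd n j v y) x * g x + pd n j v x * pd n j g x)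
          + (pd n j v x * pd n j g x + v x * pd n j (fun y => pd n j g y) x) := by
    intro j
    have : (fun y => pd n j (fun z => R z k) y)
        = fun y => pd n j v y * g y + v y * pd n j g y := funext (F1 j)
    rw [this, pd_add j ((Dpv j x).fun_mul (Dg x)) ((Dv x).fun_mul (Dpg j x)),
      pd_mul j (Dpv j x) (Dg x), pd_mul j (Dv x) (Dpg j x)]
  -- γ in terms of g
  have hγe : γ = fun y => g y * g y := funext fun y => by rw [← hbranch y]; ring
  have hpdγ : ∀ (j : Fin n) (y : Fin n → ℝ),
      pd n j γ y = pd n j g y * g y + g y * pd n j g y := by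
    intro j y; rw [hγe]; exact pd_mul j (Dg y) (Dg y)
  have F3 : ∀ (j : Fin n) (y : Fin n → ℝ),
      α y j = (pd n j g y * g y + g y * pd n j g y) / (g y * g y) := by
    intro j y; rw [hα]; simp only
    rw [hpdγ j y, show γ y = g y * g y from by rw [← hbranch y]; ring]
  -- derivative of α j
  have Dα : ∀ (j : Fin n) (y : Fin n → ℝ), DifferentiableAt ℝ (fun y => α y j) y := by
    intro j y
    have : (fun y => α y j)
        = fun y => (pd n j g y * g y + g y * pd n j g y) / (g y * g y) :=
      funext fun y => F3 j y
    have he : (fun y => (pd n j g y * g y + g y * pd n j g y) / (g y * g y))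
        = fun y => (pd n j g y * g y + g y * pd n j g y) * ((g y * g y))⁻¹ :=
      funext fun y => div_eq_mul_inv _ _
    rw [this, he]
    exact (((Dpg j y).mul (Dg y)).add ((Dg y).mul (Dpg j y))).mul
      (((Dg y).mul (Dg y)).inv (mul_ne_zero (hg0 y) (hg0 y)))
  have F4 : ∀ j : Fin n,
      pd n j (fun y => α y j) x
        = ((pd n j (fun y => pd n j g y) x * g x + pd n j g x * pd n j g x
            + (pd n j g x * pd n j g x + g x * pd n j (fun y => pd n j g y) x))
          - α x j * (pd n j g x * g x + g x * pd n j g x)) / (g x * g x) := by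
    intro j
    have hNfun : (fun y => pd n j g y * g y + g y * pd n j g y)
        = fun y => α y j * (g y * g y) := by
      funext y
      rw [F3 j y, div_mul_cancel₀ _ (mul_ne_zero (hg0 y) (hg0 y))]
    have hE : pd n j (fun y => pd n j g y * g y + g y * pd n j g y) x
        = pd n j (fun y => α y j) x * (g x * g x)
          + α x j * (pd n j g x * g x + g x * pd n j g x) := by
      rw [hNfun, pd_mul j (Dα j x) ((Dg x).fun_mul (Dg x)), pd_mul j (Dg x) (Dg x)]
    have hE2 : pd n j (fun y => pd n j g y * g y + g y * pd n j g y) x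
        = pd n j (fun y => pd n j g y) x * g x + pd n j g x * pd n j g x
          + (pd n j g x * pd n j g x + g x * pd n j (fun y => pd n j g y) x) := by
      rw [pd_add j ((Dpg j x).fun_mul (Dg x)) ((Dg x).fun_mul (Dpg j x)),
        pd_mul j (Dpg j x) (Dg x), pd_mul j (Dg x) (Dpg j x)]
    rw [eq_div_iff (mul_ne_zero (hg0 x) (hg0 x))]
    rw [hE2] at hE
    linear_combination -hE
  -- per-index identity
  have hkey : ∀ j ∈ Finset.univ (α := Fin n),
      g x * (-(pd n j (fun y => pd n j v y) x)
          - 2 * Complex.I * (ζ j * pd n j v x)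
          - α x j * (pd n j v x + Complex.I * ζ j * (R x k / g x)))
      = -(pd n j (fun y => pd n j (fun z => R z k) y) x)
        - 2 * Complex.I * (ζ j * pd n j (fun z => R z k) x)
        + ((1 / 4) * α x j ^ 2 + (1 / 2) * pd n j (fun y => α y j) x) * R x k := by
    intro j _
    rw [show R x k / g x = v x from by rw [hvdef], F2 j, F1 j x, F4 j, F3 j x, hr]
    have ha := hg0 x
    ring_nf
    field_simp
    ring
  -- assemble
  rw [hqf]
  simp only []
  rw [mergeL (2 * Complex.I) _ (fun j => ζ j * pd n j v x) _]
  rw [Finset.mul_sum]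
  rw [Finset.sum_congr rfl hkey]
  rw [show ((1:ℂ)/4 * (∑ j, α x j ^ 2) + 1/2 * ∑ j, pd n j (fun y => α y j) x) * R x k
      = ∑ j, ((1/4) * α x j ^ 2 + (1/2) * pd n j (fun y => α y j) x) * R x k from by
    rw [← Finset.sum_mul, Finset.sum_add_distrib, ← Finset.mul_sum, ← Finset.mul_sum]]
  exact (mergeR (2 * Complex.I) _ (fun j => ζ j * pd n j (fun z => R z k) x) _).symm
end
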